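/- Let α, β, k > 0 and 0 < p < q with k·p < 1 and k·q > 1, let T_c > 0, and let γ := Γ((1−k·p)/(q−p)) · Γ((k·q−1)/(q−p)) / (α^k · Γ(k) · (q−p)) · (α/β)^((1−k·p)/(q−p)). Suppose V : ℝ → ℝ satisfies V(t) ≥ 0 for all t ≥ 0 and, for every t ≥ 0, V is differentiable at t with V'(t) ≤ −(γ/T_c) · (α·V(t)^p + β·V(t)^q)^k. Then V(t) = 0 for all t ≥ T_c. (Lyapunov-type differential inequality implying predefined-time convergence before the user-chosen time T_c.) -/

import Mathlib

open Real MeasureTheory Set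


lemma PTL_beta_integrand_cast {a b x : ℝ} (hx0 : 0 < x) (hx1 : x < 1) :
    (x:ℂ) ^ ((a:ℂ)-1) * (1-(x:ℂ)) ^ ((b:ℂ)-1) = ((x ^ (a-1) * (1-x) ^ (b-1) : ℝ) : ℂ) := by
  have e1 : ((a:ℂ)-1) = ((a-1:ℝ):ℂ) := by push_cast; ring
  have e2 : ((b:ℂ)-1) = ((b-1:ℝ):ℂ) := by push_cast; ring
  have e3 : (1-(x:ℂ)) = ((1-x:ℝ):ℂ) := by push_cast; ring
  rw [e1, e2, e3, ← Complex.ofReal_cpow hx0.le, ← Complex.ofReal_cpow (by linarith),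
    ← Complex.ofReal_mul]

lemma PTL_complex_beta_eq (a b : ℝ) :
    ∫ x in Ioo (0:ℝ) 1, (x:ℂ) ^ ((a:ℂ)-1) * (1-(x:ℂ)) ^ ((b:ℂ)-1)
      = ((∫ x in Ioo (0:ℝ) 1, x ^ (a-1) * (1-x) ^ (b-1) : ℝ) : ℂ) :=
  calc ∫ x in Ioo (0:ℝ) 1, (x:ℂ) ^ ((a:ℂ)-1) * (1-(x:ℂ)) ^ ((b:ℂ)-1)
      = ∫ x in Ioo (0:ℝ) 1, ((x ^ (a-1) * (1-x) ^ (b-1) : ℝ) : ℂ) :=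
        setIntegral_congr_fun measurableSet_Ioo (fun x hx => PTL_beta_integrand_cast hx.1 hx.2)
    _ = _ := integral_ofReal

lemma PTL_real_beta_integrable {a b : ℝ} (ha : 0 < a) (hb : 0 < b) :
    IntegrableOn (fun x : ℝ => x ^ (a-1) * (1-x) ^ (b-1)) (Ioo 0 1) := by
  have h := Complex.betaIntegral_convergent (u := (a:ℂ)) (v := (b:ℂ)) (by simpa) (by simpa)
  have h2 : IntegrableOn (fun x : ℝ => (x:ℂ) ^ ((a:ℂ)-1) * (1-(x:ℂ)) ^ ((b:ℂ)-1)) (Ioo 0 1) := by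
    have := h.1
    rw [integrableOn_Ioc_iff_integrableOn_Ioo] at this
    simpa using this
  have h3 : IntegrableOn (fun x : ℝ => ((x:ℂ) ^ ((a:ℂ)-1) * (1-(x:ℂ)) ^ ((b:ℂ)-1)).re) (Ioo 0 1) :=
    h2.re
  refine h3.congr_fun (fun x hx => ?_) measurableSet_Ioo
  dsimp only
  rw [PTL_beta_integrand_cast hx.1 hx.2, Complex.ofReal_re]

lemma PTL_real_beta {a b : ℝ} (ha : 0 < a) (hb : 0 < b) :
    ∫ x in Ioo (0:ℝ) 1, x ^ (a-1) * (1-x) ^ (b-1)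
      = Real.Gamma a * Real.Gamma b / Real.Gamma (a+b) := by
  have hG := Complex.Gamma_mul_Gamma_eq_betaIntegral (s := (a:ℂ)) (t := (b:ℂ)) (by simpa) (by simpa)
  have hB : Complex.betaIntegral a b = ((∫ x in Ioo (0:ℝ) 1, x ^ (a-1) * (1-x) ^ (b-1) : ℝ) : ℂ) := by
    rw [Complex.betaIntegral, intervalIntegral.integral_of_le zero_le_one,
      MeasureTheory.integral_Ioc_eq_integral_Ioo]
    exact PTL_complex_beta_eq a b
  rw [hB, ← Complex.ofReal_add, Complex.Gamma_ofReal, Complex.Gamma_ofReal,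
    Complex.Gamma_ofReal, ← Complex.ofReal_mul, ← Complex.ofReal_mul] at hG
  have h := Complex.ofReal_inj.mp hG
  have hGpos : 0 < Real.Gamma (a+b) := Real.Gamma_pos_of_pos (by linarith)
  field_simp
  linarith [h]

-- map x ↦ x/(1-x) : Ioo 0 1 → Ioi 0
lemma PTL_map_img : (fun x : ℝ => x / (1-x)) '' Ioo 0 1 = Ioi 0 := by
  ext t
  constructor
  · rintro ⟨x, ⟨hx0, hx1⟩, rfl⟩
    exact div_pos hx0 (by linarith)
  · intro ht
    have ht' : (0:ℝ) < t := ht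
    refine ⟨t / (1+t), ⟨div_pos ht' (by linarith), ?_⟩, ?_⟩
    · rw [div_lt_one (by linarith)]; linarith
    · field_simp
      ring

lemma PTL_map_deriv {x : ℝ} (hx : x ∈ Ioo (0:ℝ) 1) :
    HasDerivAt (fun x : ℝ => x / (1-x)) (((1-x)^2)⁻¹) x := by
  have h := (hasDerivAt_id x).div ((hasDerivAt_const x (1:ℝ)).sub (hasDerivAt_id x))
    (by intro h'; simp at h'; nlinarith [hx.2, h'])
  refine h.congr_deriv ?_
  simp only [Pi.sub_apply, id]
  ring

lemma PTL_map_inj : InjOn (fun x : ℝ => x / (1-x)) (Ioo 0 1) := by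
  intro x hx y hy h
  simp only at h
  have hx1 : (1:ℝ) - x ≠ 0 := by nlinarith [hx.2]
  have hy1 : (1:ℝ) - y ≠ 0 := by nlinarith [hy.2]
  field_simp at h
  nlinarith [h]

lemma PTL_beta_Ioi {a b : ℝ} (ha : 0 < a) (hb : 0 < b) :
    (∫ t in Ioi (0:ℝ), t ^ (a-1) * (1+t) ^ (-(a+b)))
      = Real.Gamma a * Real.Gamma b / Real.Gamma (a+b) ∧
    IntegrableOn (fun t : ℝ => t ^ (a-1) * (1+t) ^ (-(a+b))) (Ioi 0) := by
  have hder : ∀ x ∈ Ioo (0:ℝ) 1, HasDerivWithinAt (fun x : ℝ => x / (1-x)) (((1-x)^2)⁻¹) (Ioo 0 1) x :=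
    fun x hx => (PTL_map_deriv hx).hasDerivWithinAt
  have key : ∀ x ∈ Ioo (0:ℝ) 1,
      |((1-x)^2)⁻¹| • ((x/(1-x)) ^ (a-1) * (1+(x/(1-x))) ^ (-(a+b))) = x ^ (a-1) * (1-x) ^ (b-1) := by
    intro x ⟨hx0, hx1⟩
    have h1 : (0:ℝ) < 1 - x := by linarith
    have e1 : 1 + x/(1-x) = (1-x)⁻¹ := by field_simp; ring
    rw [smul_eq_mul, abs_of_pos (by positivity), e1, div_eq_mul_inv,
      Real.mul_rpow hx0.le (inv_nonneg.2 h1.le), Real.inv_rpow h1.le, Real.inv_rpow h1.le,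
      ← Real.rpow_neg h1.le, ← Real.rpow_neg h1.le,
      ← Real.rpow_natCast (1-x) 2, ← Real.rpow_neg h1.le]
    calc (1-x) ^ (-((2:ℕ):ℝ)) * (x ^ (a-1) * (1-x) ^ (-(a-1)) * (1-x) ^ (-(-(a+b))))
        = x ^ (a-1) * ((1-x) ^ (-((2:ℕ):ℝ)) * (1-x) ^ (-(a-1)) * (1-x) ^ (-(-(a+b)))) := by ring
      _ = x ^ (a-1) * (1-x) ^ (b-1) := by
          rw [← Real.rpow_add h1, ← Real.rpow_add h1]
          congr 1
          push_cast
          ring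
  constructor
  · rw [← PTL_map_img, integral_image_eq_integral_abs_deriv_smul measurableSet_Ioo hder PTL_map_inj,
      ← PTL_real_beta ha hb]
    exact setIntegral_congr_fun measurableSet_Ioo key
  · rw [← PTL_map_img, integrableOn_image_iff_integrableOn_abs_deriv_smul measurableSet_Ioo hder PTL_map_inj]
    exact ((PTL_real_beta_integrable ha hb).congr_fun (fun x hx => (key x hx).symm) measurableSet_Ioo)
lemma PTL_main_integral (α β k p q : ℝ) (hα : 0 < α) (hβ : 0 < β) (hk : 0 < k)
    (hp : 0 < p) (hpq : p < q) (hkp : k * p < 1) (hkq : 1 < k * q) :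
    (∫ u in Ioi (0:ℝ), (α * u ^ p + β * u ^ q) ^ (-k))
      = Real.Gamma ((1 - k * p) / (q - p)) * Real.Gamma ((k * q - 1) / (q - p)) /
        (α ^ k * Real.Gamma k * (q - p)) * (α / β) ^ ((1 - k * p) / (q - p)) ∧
    IntegrableOn (fun u : ℝ => (α * u ^ p + β * u ^ q) ^ (-k)) (Ioi 0) := by
  set r := q - p with hr_def
  have hr : 0 < r := by simp [hr_def]; linarith
  set c := β / α with hc_def
  have hc : 0 < c := div_pos hβ hα
  set a := (1 - k * p) / r with ha_def
  set b := (k * q - 1) / r with hb_def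
  have ha : 0 < a := div_pos (by linarith) hr
  have hb : 0 < b := div_pos (by linarith) hr
  have hra : r * a = 1 - k * p := by rw [ha_def]; field_simp
  have hab : a + b = k := by
    rw [ha_def, hb_def, ← add_div, div_eq_iff hr.ne', hr_def]
    ring
  -- substitution u ↦ c * u ^ r
  have himg : (fun u : ℝ => c * u ^ r) '' Ioi 0 = Ioi 0 := by
    ext t
    constructor
    · rintro ⟨u, hu, rfl⟩
      have : (0:ℝ) < u := hu
      show (0:ℝ) < c * u ^ r
      positivity
    · intro ht
      have ht' : (0:ℝ) < t := ht
      refine ⟨(t / c) ^ r⁻¹, ?_, ?_⟩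
      · show (0:ℝ) < (t / c) ^ r⁻¹
        positivity
      · show c * ((t / c) ^ r⁻¹) ^ r = t
        rw [← Real.rpow_mul (by positivity), inv_mul_cancel₀ hr.ne', Real.rpow_one]
        field_simp
  have hder : ∀ u ∈ Ioi (0:ℝ), HasDerivWithinAt (fun u : ℝ => c * u ^ r)
      (c * (r * u ^ (r - 1))) (Ioi 0) u := by
    intro u hu
    exact ((Real.hasDerivAt_rpow_const (Or.inl (ne_of_gt hu))).const_mul c).hasDerivWithinAt
  have hinj : InjOn (fun u : ℝ => c * u ^ r) (Ioi 0) := by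
    intro x hx y hy h
    simp only at h
    have h2 : x ^ r = y ^ r := mul_left_cancel₀ hc.ne' h
    exact Real.rpow_left_injOn hr.ne' (show (0:ℝ) ≤ x from le_of_lt hx) (show (0:ℝ) ≤ y from le_of_lt hy) h2
  set C := c ^ a * r * α ^ k with hC_def
  have hC : 0 < C := by positivity
  have key : ∀ u ∈ Ioi (0:ℝ),
      |c * (r * u ^ (r-1))| • ((c * u ^ r) ^ (a-1) * (1 + c * u ^ r) ^ (-(a+b)))
        = C * ((α * u ^ p + β * u ^ q) ^ (-k)) := by
    intro u hu
    have hu : (0:ℝ) < u := hu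
    have hX : (0:ℝ) < 1 + c * u ^ r := by positivity
    have e0 : α * u ^ p + β * u ^ q = α * u ^ p * (1 + c * u ^ r) := by
      have huq : u ^ q = u ^ p * u ^ r := by
        rw [← Real.rpow_add hu]; congr 1; simp [hr_def]
      rw [huq, hc_def]
      field_simp
    have e1 : (α * u ^ p + β * u ^ q) ^ (-k)
        = α ^ (-k) * u ^ (p * (-k)) * (1 + c * u ^ r) ^ (-k) := by
      rw [e0, Real.mul_rpow (by positivity) hX.le, Real.mul_rpow hα.le (by positivity),
        ← Real.rpow_mul hu.le]
    have ec : c * c ^ (a-1) = c ^ a := by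
      nth_rewrite 1 [← Real.rpow_one c]
      rw [← Real.rpow_add hc]; norm_num
    have eu : u ^ (r-1) * u ^ (r*(a-1)) = u ^ (p * (-k)) := by
      rw [← Real.rpow_add hu]
      congr 1
      have : r - 1 + r * (a-1) = r * a - 1 := by ring
      rw [this, hra]; ring
    have eα : α ^ k * α ^ (-k) = 1 := by
      rw [← Real.rpow_add hα]; simp
    rw [smul_eq_mul, abs_of_pos (by positivity), e1,
      Real.mul_rpow hc.le (by positivity), ← Real.rpow_mul hu.le, hab]
    calc c * (r * u ^ (r-1)) * (c ^ (a-1) * u ^ (r*(a-1)) * (1 + c * u ^ r) ^ (-k))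
        = (c * c ^ (a-1)) * r * (u ^ (r-1) * u ^ (r*(a-1))) * (1 + c * u ^ r) ^ (-k) := by ring
      _ = c ^ a * r * u ^ (p*(-k)) * (1 + c * u ^ r) ^ (-k) := by rw [ec, eu]
      _ = C * (α ^ (-k) * u ^ (p * (-k)) * (1 + c * u ^ r) ^ (-k)) := by
          rw [hC_def]
          calc c ^ a * r * u ^ (p*(-k)) * (1 + c * u ^ r) ^ (-k)
              = c ^ a * r * (α ^ k * α ^ (-k)) * u ^ (p*(-k)) * (1 + c * u ^ r) ^ (-k) := by
                rw [eα]; ring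
            _ = _ := by ring
  obtain ⟨hval, hint⟩ := PTL_beta_Ioi ha hb
  rw [← himg, integral_image_eq_integral_abs_deriv_smul measurableSet_Ioi hder hinj] at hval
  rw [← himg, integrableOn_image_iff_integrableOn_abs_deriv_smul measurableSet_Ioi hder hinj] at hint
  rw [setIntegral_congr_fun measurableSet_Ioi key, integral_const_mul] at hval
  have hint' : IntegrableOn (fun u : ℝ => (α * u ^ p + β * u ^ q) ^ (-k)) (Ioi 0) := by
    have h2 : IntegrableOn (fun u : ℝ => C⁻¹ * (C * ((α * u ^ p + β * u ^ q) ^ (-k)))) (Ioi 0) :=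
      (hint.congr_fun key measurableSet_Ioi).const_mul C⁻¹
    refine h2.congr_fun (fun u hu => ?_) measurableSet_Ioi
    dsimp only
    rw [inv_mul_cancel_left₀ hC.ne']
  refine ⟨?_, hint'⟩
  have hΓk : 0 < Real.Gamma k := Real.Gamma_pos_of_pos hk
  rw [hab] at hval
  have hca : (α / β) ^ a = (c ^ a)⁻¹ := by
    rw [hc_def, ← Real.inv_rpow (by positivity)]
    congr 1
    field_simp
  rw [hca]
  have hcane : c ^ a ≠ 0 := by positivity
  have hαk : (0:ℝ) < α ^ k := by positivity
  field_simp [hC_def] at hval ⊢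
  nlinarith [hval]

/-- Lyapunov-type differential inequality implying predefined-time convergence:
if `V ≥ 0` and `V' ≤ -(γ/T_c) (α V^p + β V^q)^k` for `t ≥ 0`, then `V` vanishes
for all `t ≥ T_c`. -/
theorem predefined_time_lyapunov
    (α β k p q : ℝ) (hα : 0 < α) (hβ : 0 < β) (hk : 0 < k)
    (hp : 0 < p) (hpq : p < q) (hkp : k * p < 1) (hkq : 1 < k * q)
    (Tc : ℝ) (hTc : 0 < Tc)
    (γ : ℝ)
    (hγ : γ = Real.Gamma ((1 - k * p) / (q - p)) * Real.Gamma ((k * q - 1) / (q - p)) /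
        (α ^ k * Real.Gamma k * (q - p)) * (α / β) ^ ((1 - k * p) / (q - p)))
    (V : ℝ → ℝ)
    (hVnonneg : ∀ t : ℝ, 0 ≤ t → 0 ≤ V t)
    (hVderiv : ∀ t : ℝ, 0 ≤ t → DifferentiableAt ℝ V t ∧
      deriv V t ≤ -(γ / Tc) * (α * (V t) ^ p + β * (V t) ^ q) ^ k) :
    ∀ t : ℝ, Tc ≤ t → V t = 0 := by
  obtain ⟨hI, hInt⟩ := PTL_main_integral α β k p q hα hβ hk hp hpq hkp hkq
  set f : ℝ → ℝ := fun u => (α * u ^ p + β * u ^ q) ^ (-k) with hf_def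
  rw [← hγ] at hI
  have hγpos : 0 < γ := by
    rw [hγ]
    have h1 : 0 < Real.Gamma ((1 - k * p) / (q - p)) :=
      Real.Gamma_pos_of_pos (div_pos (by linarith) (by linarith))
    have h2 : 0 < Real.Gamma ((k * q - 1) / (q - p)) :=
      Real.Gamma_pos_of_pos (div_pos (by linarith) (by linarith))
    have h3 : 0 < Real.Gamma k := Real.Gamma_pos_of_pos hk
    have h4 : (0:ℝ) < q - p := by linarith
    positivity
  -- V is antitone on [0, ∞)
  have hVcont : ContinuousOn V (Ici 0) :=
    fun t ht => ((hVderiv t ht).1.continuousAt).continuousWithinAt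
  have hVanti : AntitoneOn V (Ici 0) := by
    apply antitoneOn_of_deriv_nonpos (convex_Ici 0) hVcont
    · intro t ht
      rw [interior_Ici] at ht
      exact ((hVderiv t (le_of_lt ht)).1).differentiableWithinAt
    · intro t ht
      rw [interior_Ici] at ht
      have h := (hVderiv t (le_of_lt ht)).2
      have hbase : 0 ≤ α * V t ^ p + β * V t ^ q := by
        have := hVnonneg t (le_of_lt ht)
        positivity
      have : (0:ℝ) ≤ (α * V t ^ p + β * V t ^ q) ^ k := Real.rpow_nonneg hbase k
      nlinarith [div_pos hγpos hTc]
  -- suffices to show V Tc = 0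
  suffices hVTc : V Tc = 0 by
    intro t ht
    refine le_antisymm ?_ (hVnonneg t (by linarith))
    calc V t ≤ V Tc := hVanti (mem_Ici.mpr hTc.le) (mem_Ici.mpr (by linarith)) ht
      _ = 0 := hVTc
  by_contra hne
  have hVTcpos : 0 < V Tc := lt_of_le_of_ne (hVnonneg Tc hTc.le) (Ne.symm hne)
  have hVpos : ∀ t ∈ Icc (0:ℝ) Tc, 0 < V t := fun t ht =>
    lt_of_lt_of_le hVTcpos (hVanti (mem_Ici.mpr ht.1) (mem_Ici.mpr hTc.le) ht.2)
  -- properties of f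
  have hfpos : ∀ u : ℝ, 0 < u → 0 < f u := by
    intro u hu
    have : 0 < α * u ^ p + β * u ^ q := by positivity
    exact Real.rpow_pos_of_pos this _
  have hfcont : ContinuousOn f (Ioi 0) := by
    intro u hu
    have hu' : (0:ℝ) < u := hu
    have hb : ContinuousAt (fun u : ℝ => α * u ^ p + β * u ^ q) u := by
      have c1 := Real.continuousAt_rpow_const u p (Or.inl hu'.ne')
      have c2 := Real.continuousAt_rpow_const u q (Or.inl hu'.ne')
      exact ((c1.const_smul α).add (c2.const_smul β)).congr (by
        filter_upwards with x; simp [smul_eq_mul])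
    have hbpos : (0:ℝ) < α * u ^ p + β * u ^ q := by positivity
    exact (hb.rpow_const (Or.inl hbpos.ne')).continuousWithinAt
  -- G: antiderivative
  set G : ℝ → ℝ := fun v => ∫ u in (0:ℝ)..v, f u with hG_def
  have hInterval : ∀ v : ℝ, 0 ≤ v → IntervalIntegrable f volume 0 v := by
    intro v hv
    rw [intervalIntegrable_iff_integrableOn_Ioc_of_le hv]
    exact hInt.mono_set Ioc_subset_Ioi_self
  have hGderiv : ∀ v : ℝ, 0 < v → HasDerivAt G (f v) v := by
    intro v hv
    exact intervalIntegral.integral_hasDerivAt_right (hInterval v hv.le)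
      (hfcont.stronglyMeasurableAtFilter isOpen_Ioi v hv) ((hfcont v hv).continuousAt
        (Ioi_mem_nhds hv))
  -- W := G ∘ V + (γ/Tc) t
  set W : ℝ → ℝ := fun t => G (V t) + γ / Tc * t with hW_def
  have hWderiv : ∀ t ∈ Icc (0:ℝ) Tc,
      HasDerivAt W (f (V t) * deriv V t + γ / Tc) t := by
    intro t ht
    have h1 := (hGderiv (V t) (hVpos t ht)).comp t ((hVderiv t ht.1).1.hasDerivAt)
    have h2 : HasDerivAt (fun t : ℝ => γ / Tc * t) (γ / Tc) t := by
      simpa using (hasDerivAt_id t).const_mul (γ / Tc)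
    exact h1.add h2
  have hWanti : AntitoneOn W (Icc 0 Tc) := by
    apply antitoneOn_of_deriv_nonpos (convex_Icc 0 Tc)
    · exact fun t ht => ((hWderiv t ht).differentiableAt.continuousAt).continuousWithinAt
    · intro t ht
      rw [interior_Icc] at ht
      exact ((hWderiv t (Ioo_subset_Icc_self ht)).differentiableAt).differentiableWithinAt
    · intro t ht
      rw [interior_Icc] at ht
      have ht' := Ioo_subset_Icc_self ht
      rw [(hWderiv t ht').deriv]
      have hd := (hVderiv t ht'.1).2
      set X := α * V t ^ p + β * V t ^ q with hX_def
      have hXpos : 0 < X := by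
        have := hVpos t ht'
        rw [hX_def]; positivity
      have hfV : f (V t) = X ^ (-k) := rfl
      have hmul : X ^ (-k) * X ^ k = 1 := by
        rw [← Real.rpow_add hXpos]; simp
      have hfVpos : 0 < X ^ (-k) := Real.rpow_pos_of_pos hXpos _
      have : f (V t) * deriv V t ≤ X ^ (-k) * (-(γ / Tc) * X ^ k) := by
        rw [hfV]
        exact mul_le_mul_of_nonneg_left hd hfVpos.le
      have heq : X ^ (-k) * (-(γ / Tc) * X ^ k) = -(γ / Tc) := by
        calc X ^ (-k) * (-(γ / Tc) * X ^ k) = -(γ / Tc) * (X ^ (-k) * X ^ k) := by ring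
          _ = -(γ / Tc) := by rw [hmul]; ring
      rw [heq] at this
      linarith
  -- conclude
  have hW0 : W Tc ≤ W 0 := hWanti (left_mem_Icc.mpr hTc.le) (right_mem_Icc.mpr hTc.le)
    hTc.le
  have hWTc : W Tc = G (V Tc) + γ := by
    rw [hW_def]
    simp only
    rw [div_mul_cancel₀ _ hTc.ne']
  have hW0' : W 0 = G (V 0) := by rw [hW_def]; simp
  -- G (V 0) ≤ γ
  have hGle : G (V 0) ≤ γ := by
    rw [← hI, hG_def]
    simp only
    rw [intervalIntegral.integral_of_le (hVnonneg 0 le_rfl)]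
    apply setIntegral_mono_set hInt
    · filter_upwards [ae_restrict_mem measurableSet_Ioi] with u hu using (hfpos u hu).le
    · exact HasSubset.Subset.eventuallyLE Ioc_subset_Ioi_self
  -- G (V Tc) > 0
  have hGpos : 0 < G (V Tc) := by
    rw [hG_def]
    simp only
    rw [intervalIntegral.integral_of_le hVTcpos.le]
    have hintOn : IntegrableOn f (Ioc 0 (V Tc)) := hInt.mono_set Ioc_subset_Ioi_self
    rw [setIntegral_pos_iff_support_of_nonneg_ae ?_ hintOn]
    · have hsub : Ioc 0 (V Tc) ⊆ Function.support f ∩ Ioc 0 (V Tc) := by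
        intro u hu
        exact ⟨(hfpos u hu.1).ne', hu⟩
      calc (0:ENNReal) < volume (Ioc 0 (V Tc)) := by
            simp [hVTcpos]
        _ ≤ volume (Function.support f ∩ Ioc 0 (V Tc)) := measure_mono hsub
    · filter_upwards [ae_restrict_mem measurableSet_Ioc] with u hu using (hfpos u hu.1).le
  rw [hWTc, hW0'] at hW0
  linarith
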